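/- The functions β_k(t) = (1/k)(1 − e^{−t})^{k−1}((k+1)e^{−t} − 1), for k ≥ 1, satisfy the system of differential equations dβ_k/dt = −δ_{k1} − k β_k(t) + (k−1) β_{k−1}(t) with initial conditions β_k(0) = δ_{k1} (where β_0 is interpreted as 0 and δ_{k1} = 1 if k = 1, else 0). -/

import Mathlib

/-- The functions `β_k(t) = (1/k)(1 - e^{-t})^{k-1}((k+1)e^{-t} - 1)`, `k ≥ 1` (with `β₀ = 0`),
satisfy `dβ_k/dt = -δ_{k1} - k β_k(t) + (k-1) β_{k-1}(t)` and `β_k(0) = δ_{k1}`. -/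
theorem stmt_13 (β : ℕ → ℝ → ℝ)
    (hβ0 : ∀ t, β 0 t = 0)
    (hβ : ∀ k : ℕ, 1 ≤ k → ∀ t : ℝ,
      β k t = (1 / (k : ℝ)) * (1 - Real.exp (-t)) ^ (k - 1) *
        (((k : ℝ) + 1) * Real.exp (-t) - 1)) :
    ∀ k : ℕ, 1 ≤ k →
      (∀ t : ℝ, HasDerivAt (fun s => β k s)
        (-(if k = 1 then (1 : ℝ) else 0) - (k : ℝ) * β k t + ((k : ℝ) - 1) * β (k - 1) t) t) ∧
      β k 0 = (if k = 1 then (1 : ℝ) else 0) := by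
  intro k hk
  obtain ⟨n, rfl⟩ : ∃ n, k = n + 1 := ⟨k - 1, (Nat.succ_pred_eq_of_pos hk).symm⟩
  constructor
  · intro t
    have hfun : (fun s => β (n+1) s) =
        fun s => (1/((n:ℝ)+1)) * (1 - Real.exp (-s)) ^ n * (((n:ℝ)+1+1) * Real.exp (-s) - 1) := by
      funext s
      have := hβ (n+1) (Nat.le_add_left 1 n) s
      simpa [Nat.add_sub_cancel] using this
    rw [hfun]
    have hexp : HasDerivAt (fun s : ℝ => Real.exp (-s)) (-Real.exp (-t)) t := by
      simpa using (hasDerivAt_neg t).exp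
    have h1 : HasDerivAt (fun s : ℝ => 1 - Real.exp (-s)) (Real.exp (-t)) t := by
      simpa using hexp.const_sub 1
    have hpow := h1.pow n
    have h2 : HasDerivAt (fun s : ℝ => ((n:ℝ)+1+1) * Real.exp (-s) - 1)
        (((n:ℝ)+1+1) * -Real.exp (-t)) t := (hexp.const_mul _).sub_const 1
    have hmain : HasDerivAt (fun s => (1/((n:ℝ)+1)) * (1 - Real.exp (-s)) ^ n * (((n:ℝ)+1+1) * Real.exp (-s) - 1)) _ t := (hpow.const_mul (1/((n:ℝ)+1))).mul h2
    convert hmain using 1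
    set u := Real.exp (-t) with hu
    have hβk := hβ (n+1) (Nat.le_add_left 1 n) t
    rcases Nat.eq_zero_or_pos n with rfl | hn
    · simp only [hβ0]
      simp at hβk ⊢
      rw [hβk]; ring
    · obtain ⟨m, rfl⟩ : ∃ m, n = m + 1 := ⟨n - 1, (Nat.succ_pred_eq_of_pos hn).symm⟩
      have hβn := hβ (m+1) (Nat.le_add_left 1 m) t
      simp only [Nat.add_sub_cancel, Pi.pow_apply, ← hu] at hβk hβn ⊢
      rw [hβk, hβn]
      push_cast
      have hm1 : ((m:ℝ)+1) ≠ 0 := by positivity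
      have hm2 : ((m:ℝ)+1+1) ≠ 0 := by positivity
      field_simp
      ring
  · have h0 := hβ (n+1) (Nat.le_add_left 1 n) 0
    rcases Nat.eq_zero_or_pos n with rfl | hn
    · simp at h0 ⊢
      rw [h0]
    · have hne : ¬ n + 1 = 1 := by omega
      simp only [if_neg hne]
      rw [h0]
      rw [show (-0:ℝ) = 0 by ring]
      rw [Real.exp_zero]
      norm_num [zero_pow (show n ≠ 0 by omega), Nat.add_sub_cancel]
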